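/- Let κ : [0,∞) → ℝ be a continuous, nonpositive and nonincreasing function, and let G : [0,∞) → ℝ be a twice continuously differentiable solution of the differential equation G''(t) + κ(t)·G(t) = 0 with initial conditions G(0) = 0 and G'(0) = 1. Then for every r ≥ 0 one has G(r) ≤ r · exp(r·√(−κ(r))). -/

import Mathlib

open Real Set

/-- If `κ : [0,∞) → ℝ` is continuous, nonpositive and nonincreasing, and `G` solves
`G'' + κ G = 0`, `G(0) = 0`, `G'(0) = 1`, then `G(r) ≤ r exp(r √(-κ(r)))` for every `r ≥ 0`. -/
theorem comparison_upper_bound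
    (κ G G' G'' : ℝ → ℝ)
    (hκ_cont : ContinuousOn κ (Ici 0))
    (hκ_nonpos : ∀ t ∈ Ici (0:ℝ), κ t ≤ 0)
    (hκ_anti : AntitoneOn κ (Ici 0))
    (hG' : ∀ t ∈ Ici (0:ℝ), HasDerivWithinAt G (G' t) (Ici 0) t)
    (hG'' : ∀ t ∈ Ici (0:ℝ), HasDerivWithinAt G' (G'' t) (Ici 0) t)
    (hG''_cont : ContinuousOn G'' (Ici 0))
    (hODE : ∀ t ∈ Ici (0:ℝ), G'' t + κ t * G t = 0)
    (hG0 : G 0 = 0) (hG'0 : G' 0 = 1) :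
    ∀ r ∈ Ici (0:ℝ), G r ≤ r * Real.exp (r * Real.sqrt (-κ r)) := by
  intro r hr
  rw [mem_Ici] at hr
  set K : ℝ := Real.sqrt (-κ r) with hKdef
  have hK0 : 0 ≤ K := Real.sqrt_nonneg _
  have hKsq : K ^ 2 = -κ r := Real.sq_sqrt (by linarith [hκ_nonpos r hr])
  have hsub : Icc (0:ℝ) r ⊆ Ici 0 := fun x hx => hx.1
  -- continuity of G and G' on Icc 0 r
  have hGcont : ContinuousOn G (Icc 0 r) :=
    fun x hx => ((hG' x (hsub hx)).continuousWithinAt).mono hsub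
  have hG'cont : ContinuousOn G' (Icc 0 r) :=
    fun x hx => ((hG'' x (hsub hx)).continuousWithinAt).mono hsub
  -- the vector function f t = (K * G t, G' t)
  set f : ℝ → ℝ × ℝ := fun t => (K * G t, G' t) with hfdef
  set f' : ℝ → ℝ × ℝ := fun t => (K * G' t, G'' t) with hf'def
  have hfcont : ContinuousOn f (Icc 0 r) :=
    (continuousOn_const.mul hGcont).prodMk hG'cont
  have hfderiv : ∀ x ∈ Ico (0:ℝ) r, HasDerivWithinAt f (f' x) (Ici x) x := by
    intro x hx
    have hxI : x ∈ Ici (0:ℝ) := hx.1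
    have h1 : HasDerivWithinAt G (G' x) (Ici x) x :=
      (hG' x hxI).mono (Ici_subset_Ici.2 hx.1)
    have h2 : HasDerivWithinAt G' (G'' x) (Ici x) x :=
      (hG'' x hxI).mono (Ici_subset_Ici.2 hx.1)
    exact HasDerivWithinAt.prodMk (h1.const_mul K) h2
  -- Gronwall bound
  have hbound : ∀ x ∈ Ico (0:ℝ) r, ‖f' x‖ ≤ K * ‖f x‖ + 0 := by
    intro x hx
    have hxI : x ∈ Ici (0:ℝ) := hx.1
    have hκx : κ r ≤ κ x := hκ_anti hxI hr hx.2.le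
    have hκx0 : κ x ≤ 0 := hκ_nonpos x hxI
    have hnf : ‖f x‖ = max ‖K * G x‖ ‖G' x‖ := rfl
    have hnf' : ‖f' x‖ = max ‖K * G' x‖ ‖G'' x‖ := rfl
    rw [hnf, hnf', add_zero]
    have hle1 : ‖K * G' x‖ ≤ K * max ‖K * G x‖ ‖G' x‖ := by
      rw [norm_mul, Real.norm_of_nonneg hK0]
      exact mul_le_mul_of_nonneg_left (le_max_right _ _) hK0
    have hle2 : ‖G'' x‖ ≤ K * max ‖K * G x‖ ‖G' x‖ := by
      have hODEx := hODE x hxI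
      have hG''x : G'' x = -κ x * G x := by linarith
      calc ‖G'' x‖ = ‖-κ x‖ * ‖G x‖ := by rw [hG''x, norm_mul]
        _ ≤ (K ^ 2) * ‖G x‖ := by
            apply mul_le_mul_of_nonneg_right _ (norm_nonneg _)
            rw [Real.norm_of_nonneg (by linarith : (0:ℝ) ≤ -κ x)]
            linarith
        _ = K * ‖K * G x‖ := by
            rw [norm_mul, Real.norm_of_nonneg hK0]; ring
        _ ≤ K * max ‖K * G x‖ ‖G' x‖ :=
            mul_le_mul_of_nonneg_left (le_max_left _ _) hK0
    exact max_le hle1 hle2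
  have hf0 : ‖f 0‖ ≤ 1 := by
    simp [hfdef, hG0, hG'0, Prod.norm_def]
  have hgron := norm_le_gronwallBound_of_norm_deriv_right_le hfcont hfderiv hf0 hbound
  -- bound on G'
  have hG'bound : ∀ x ∈ Ico (0:ℝ) r, ‖G' x‖ ≤ Real.exp (K * r) := by
    intro x hx
    have h1 : ‖f x‖ ≤ gronwallBound 1 K 0 (x - 0) := hgron x ⟨hx.1, hx.2.le⟩
    rw [gronwallBound_ε0, sub_zero, one_mul] at h1
    have h2 : ‖G' x‖ ≤ ‖f x‖ := le_max_right _ _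
    have h3 : Real.exp (K * x) ≤ Real.exp (K * r) :=
      Real.exp_le_exp.2 (mul_le_mul_of_nonneg_left hx.2.le hK0)
    linarith
  -- mean value inequality
  have hGderiv : ∀ x ∈ Icc (0:ℝ) r, HasDerivWithinAt G (G' x) (Icc 0 r) x :=
    fun x hx => (hG' x (hsub hx)).mono hsub
  have hmvt := norm_image_sub_le_of_norm_deriv_le_segment' hGderiv hG'bound r
    (right_mem_Icc.2 hr)
  rw [hG0, sub_zero, sub_zero] at hmvt
  calc G r ≤ ‖G r‖ := le_abs_self _
    _ ≤ Real.exp (K * r) * r := hmvt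
    _ = r * Real.exp (r * K) := by ring_nf
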